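/- Let n ≥ 1 and p₁,…,pₙ ∈ (0,1]. Let N = (I − Qₙ)⁻¹, t = N·𝟏, and v = (2N − I)·t − t ⊙ t, where ⊙ denotes entrywise (Hadamard) product. Then v₀ = ((1 + ∑_{i=1}^{n−1} ∏_{j=1}^{i} p_j)/(∏_{i=1}^{n} p_i))² − (2n−1 + ∑_{i=1}^{n−1} (2i−1)·∏_{j=1}^{n−i} p_j)/(∏_{i=1}^{n} p_i). (v₀ is the variance of the latency, in units of τ², of n-round multiheralded entanglement generation started from the failure state; for n = 2 this recovers the double-heralded result ((1+p₁)/(p₁p₂))² − (3+p₁)/(p₁p₂), and when all p_i = 1 it equals n² − (2n−1+(n−1)²) = 0.) -/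

import Mathlib

open Matrix

/-- The matrix `Qₙ` obtained from the transition matrix of `n`-round multiheralded
entanglement generation by deleting the row and column of the overall-success
state `n`: row `i` (for `0 ≤ i ≤ n−1`) has entry `1 − p (i+1)` in column `0` and
entry `p (i+1)` in column `i+1` (when `i+1 ≤ n−1`), and zeros elsewhere. -/
def multiHeraldedQ (n : ℕ) (p : ℕ → ℝ) : Matrix (Fin n) (Fin n) ℝ :=
  fun i j =>
    if (j : ℕ) = 0 then 1 - p ((i : ℕ) + 1)
    else if (j : ℕ) = (i : ℕ) + 1 then p ((i : ℕ) + 1)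
    else 0

namespace MHVaux

/-- product of `p` over `Ioc i k` -/
noncomputable def pp (p : ℕ → ℝ) (i k : ℕ) : ℝ := ∏ j ∈ Finset.Ioc i k, p j

lemma pp_self (p : ℕ → ℝ) (i : ℕ) : pp p i i = 1 := by simp [pp]

lemma pp_consec (p : ℕ → ℝ) {i k m : ℕ} (h1 : i ≤ k) (h2 : k ≤ m) :
    pp p i k * pp p k m = pp p i m := Finset.prod_Ioc_consecutive p h1 h2

lemma pp_succ (p : ℕ → ℝ) {i k : ℕ} (h : i < k) :
    pp p i k = p (i + 1) * pp p (i + 1) k := by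
  have h1 : pp p i (i+1) = p (i+1) := by simp [pp, Nat.Ioc_succ_singleton]
  rw [← pp_consec p (Nat.le_succ i) h, h1]

lemma icc_one (p : ℕ → ℝ) (k : ℕ) : ∏ j ∈ Finset.Icc 1 k, p j = pp p 0 k := by
  rw [pp, ← Finset.Icc_add_one_left_eq_Ioc]
  rfl

/-- weighted tail sums -/
noncomputable def C (n : ℕ) (p : ℕ → ℝ) (g : ℕ → ℝ) (i : ℕ) : ℝ :=
  ∑ k ∈ Finset.Icc i (n-1), pp p i k * g k

lemma C_last (n : ℕ) (p : ℕ → ℝ) (g : ℕ → ℝ) : C n p g (n-1) = g (n-1) := by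
  simp [C, pp_self]

lemma C_rec (n : ℕ) (p : ℕ → ℝ) (g : ℕ → ℝ) {i : ℕ} (h : i + 1 ≤ n - 1) :
    C n p g i = g i + p (i+1) * C n p g (i+1) := by
  unfold C
  rw [show Finset.Icc i (n-1) = insert i (Finset.Icc (i+1) (n-1)) by ext x; simp; omega,
    Finset.sum_insert (by simp), pp_self, one_mul, Finset.mul_sum]
  congr 1
  refine Finset.sum_congr rfl fun k hk => ?_
  simp only [Finset.mem_Icc] at hk
  rw [pp_succ p (by omega : i < k)]; ring

/-- the solution of the linear system -/
noncomputable def W (n : ℕ) (p : ℕ → ℝ) (g : ℕ → ℝ) (i : ℕ) : ℝ :=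
  C n p g i + (C n p g 0 / pp p 0 n) * (1 - pp p i n)

lemma W_zero (n : ℕ) (p : ℕ → ℝ) (g : ℕ → ℝ) (hPn : pp p 0 n ≠ 0) :
    W n p g 0 = C n p g 0 / pp p 0 n := by
  unfold W; field_simp; ring

/-- row formula for `(1 - Q) *ᵥ x` -/
lemma row (n : ℕ) (hn : 0 < n) (p : ℕ → ℝ) (x : Fin n → ℝ) (i : Fin n) :
    ((1 - multiHeraldedQ n p) *ᵥ x) i
      = x i - (1 - p ((i:ℕ)+1)) * x ⟨0, hn⟩
        - (if h : (i:ℕ)+1 < n then p ((i:ℕ)+1) * x ⟨(i:ℕ)+1, h⟩ else 0) := by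
  simp only [Matrix.mulVec, dotProduct, Matrix.sub_apply, Matrix.one_apply, multiHeraldedQ,
    sub_mul, Finset.sum_sub_distrib]
  simp only [ite_mul, one_mul, zero_mul, Finset.sum_ite_eq, Finset.mem_univ, if_true]
  have hQ : ∑ j : Fin n,
      (if (j:ℕ) = 0 then (1 - p ((i:ℕ)+1)) * x j
        else if (j:ℕ) = (i:ℕ)+1 then p ((i:ℕ)+1) * x j else 0)
      = (1 - p ((i:ℕ)+1)) * x ⟨0, hn⟩
        + (if h : (i:ℕ)+1 < n then p ((i:ℕ)+1) * x ⟨(i:ℕ)+1, h⟩ else 0) := by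
    by_cases h : (i:ℕ)+1 < n
    · rw [dif_pos h]
      calc ∑ j : Fin n,
            (if (j:ℕ) = 0 then (1 - p ((i:ℕ)+1)) * x j
              else if (j:ℕ) = (i:ℕ)+1 then p ((i:ℕ)+1) * x j else 0)
          = ∑ j : Fin n,
            ((if j = (⟨0, hn⟩ : Fin n) then (1 - p ((i:ℕ)+1)) * x ⟨0, hn⟩ else 0)
              + (if j = (⟨(i:ℕ)+1, h⟩ : Fin n) then p ((i:ℕ)+1) * x ⟨(i:ℕ)+1, h⟩ else 0)) := by
            refine Finset.sum_congr rfl fun j _ => ?_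
            by_cases hj0 : (j:ℕ) = 0
            · have hj : j = ⟨0, hn⟩ := Fin.ext hj0
              subst hj
              simp [Fin.ext_iff]
            · by_cases hj1 : (j:ℕ) = (i:ℕ)+1
              · have hj : j = ⟨(i:ℕ)+1, h⟩ := Fin.ext hj1
                subst hj
                simp [Fin.ext_iff, hj0]
              · simp [Fin.ext_iff, hj0, hj1]
        _ = _ := by
            rw [Finset.sum_add_distrib, Finset.sum_ite_eq', Finset.sum_ite_eq']
            simp
    · rw [dif_neg h, add_zero]
      calc ∑ j : Fin n,
            (if (j:ℕ) = 0 then (1 - p ((i:ℕ)+1)) * x j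
              else if (j:ℕ) = (i:ℕ)+1 then p ((i:ℕ)+1) * x j else 0)
          = ∑ j : Fin n,
            (if j = (⟨0, hn⟩ : Fin n) then (1 - p ((i:ℕ)+1)) * x ⟨0, hn⟩ else 0) := by
            refine Finset.sum_congr rfl fun j _ => ?_
            have hj1 : ¬ ((j:ℕ) = (i:ℕ)+1) := by have := j.isLt; omega
            by_cases hj0 : (j:ℕ) = 0
            · have hj : j = ⟨0, hn⟩ := Fin.ext hj0
              subst hj
              simp [Fin.ext_iff]
            · simp [Fin.ext_iff, hj0, hj1]
        _ = _ := by rw [Finset.sum_ite_eq']; simp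
  rw [hQ]; ring

lemma solve (n : ℕ) (hn : 0 < n) (p : ℕ → ℝ) (hPn : pp p 0 n ≠ 0) (g : ℕ → ℝ) :
    (1 - multiHeraldedQ n p) *ᵥ (fun i : Fin n => W n p g (i:ℕ)) = fun i : Fin n => g (i:ℕ) := by
  funext i
  rw [row n hn p _ i]
  have hW0 : W n p g ((⟨0, hn⟩ : Fin n) : ℕ) = C n p g 0 / pp p 0 n := W_zero n p g hPn
  by_cases h : (i:ℕ)+1 < n
  · rw [dif_pos h, hW0]
    show W n p g (i:ℕ) - _ - _ = _
    unfold W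
    rw [C_rec n p g (by omega : (i:ℕ)+1 ≤ n-1), pp_succ p (i.isLt)]
    ring
  · rw [dif_neg h, hW0]
    have hi : (i:ℕ) = n - 1 := by have := i.isLt; omega
    show W n p g (i:ℕ) - _ - _ = _
    unfold W
    rw [hi, C_last, pp_succ p (by omega : n - 1 < n), show n - 1 + 1 = n by omega,
      pp_self, mul_one]
    ring

lemma ker_zero (n : ℕ) (hn : 0 < n) (p : ℕ → ℝ) (hPn : pp p 0 n ≠ 0)
    (z : Fin n → ℝ) (hz : (1 - multiHeraldedQ n p) *ᵥ z = 0) : z = 0 := by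
  have hrow : ∀ i : Fin n, z i = (1 - p ((i:ℕ)+1)) * z ⟨0, hn⟩
      + (if h : (i:ℕ)+1 < n then p ((i:ℕ)+1) * z ⟨(i:ℕ)+1, h⟩ else 0) := by
    intro i
    have := congrFun hz i
    rw [row n hn p z i] at this
    simp only [Pi.zero_apply] at this
    linarith [this]
  have key : ∀ k : ℕ, ∀ i : Fin n, n - (i:ℕ) ≤ k → z i = (1 - pp p (i:ℕ) n) * z ⟨0, hn⟩ := by
    intro k
    induction k with
    | zero => intro i hi; exfalso; have := i.isLt; omega
    | succ k ih =>
      intro i hi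
      rw [hrow i]
      by_cases h : (i:ℕ)+1 < n
      · rw [dif_pos h, ih ⟨(i:ℕ)+1, h⟩ (by simp; omega),
          pp_succ p (i.isLt)]
        ring
      · rw [dif_neg h, pp_succ p (i.isLt), show (i:ℕ)+1 = n by have := i.isLt; omega,
          pp_self, mul_one]
        ring
  have h0 : z ⟨0, hn⟩ = 0 := by
    have := key n ⟨0, hn⟩ (by simp)
    simp only at this
    have h2 : pp p 0 n * z ⟨0, hn⟩ = 0 := by linarith [this]
    rcases mul_eq_zero.1 h2 with h | h
    · exact absurd h hPn
    · exact h
  funext i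
  rw [Pi.zero_apply, key n i (by omega), h0, mul_zero]


lemma sumPA (n : ℕ) (p : ℕ → ℝ) :
    ∑ k ∈ Finset.Icc 0 (n-1), pp p 0 k * C n p (fun _ => 1) k
      = ∑ m ∈ Finset.Icc 0 (n-1), ((m:ℝ)+1) * pp p 0 m := by
  have step1 : ∀ k ∈ Finset.Icc 0 (n-1),
      pp p 0 k * C n p (fun _ => 1) k = ∑ m ∈ Finset.Icc k (n-1), pp p 0 m := by
    intro k hk
    rw [C, Finset.mul_sum]
    refine Finset.sum_congr rfl fun m hm => ?_
    simp only [Finset.mem_Icc] at hm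
    rw [mul_one, pp_consec p (Nat.zero_le k) hm.1]
  rw [Finset.sum_congr rfl step1]
  rw [Finset.sum_comm' (s := Finset.Icc 0 (n-1)) (t := fun k => Finset.Icc k (n-1))
    (t' := Finset.Icc 0 (n-1)) (s' := fun m => Finset.Icc 0 m)
    (fun k m => by simp only [Finset.mem_Icc]; omega)]
  refine Finset.sum_congr rfl fun m _ => ?_
  rw [Finset.sum_const, Nat.card_Icc, Nat.sub_zero, nsmul_eq_mul]
  push_cast
  ring

lemma C_one_zero (n : ℕ) (p : ℕ → ℝ) :
    C n p (fun _ => 1) 0 = ∑ k ∈ Finset.Icc 0 (n-1), pp p 0 k := by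
  unfold C; simp

lemma B0_eq (n : ℕ) (hn : 0 < n) (p : ℕ → ℝ) (hPn : pp p 0 n ≠ 0) :
    C n p (fun k => W n p (fun _ => 1) k) 0
      = (∑ m ∈ Finset.Icc 0 (n-1), ((m:ℝ)+1) * pp p 0 m)
        + (C n p (fun _ => 1) 0 / pp p 0 n) * (C n p (fun _ => 1) 0 - n * pp p 0 n) := by
  have expand : ∀ k ∈ Finset.Icc 0 (n-1),
      pp p 0 k * W n p (fun _ => 1) k
        = pp p 0 k * C n p (fun _ => 1) k
          + (C n p (fun _ => 1) 0 / pp p 0 n) * (pp p 0 k - pp p 0 n) := by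
    intro k hk
    simp only [Finset.mem_Icc] at hk
    have hkn : pp p 0 k * pp p k n = pp p 0 n := pp_consec p (Nat.zero_le k) (by omega)
    unfold W
    have h2 : pp p 0 k * (1 - pp p k n) = pp p 0 k - pp p 0 n := by rw [mul_sub, mul_one, hkn]
    linear_combination (C n p (fun _ => 1) 0 / pp p 0 n) * h2
  rw [show C n p (fun k => W n p (fun _ => 1) k) 0
      = ∑ k ∈ Finset.Icc 0 (n-1), pp p 0 k * W n p (fun _ => 1) k from by unfold C; rfl]
  rw [Finset.sum_congr rfl expand, Finset.sum_add_distrib, sumPA]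
  congr 1
  rw [← Finset.mul_sum]
  congr 1
  rw [Finset.sum_sub_distrib, ← C_one_zero, Finset.sum_const, Nat.card_Icc, Nat.sub_zero,
    nsmul_eq_mul]
  push_cast [Nat.sub_add_cancel hn]
  ring

lemma key_identity (n : ℕ) (hn : 0 < n) (p : ℕ → ℝ) :
    2 * ∑ m ∈ Finset.Icc 0 (n-1), ((m:ℝ)+1) * pp p 0 m
      = (2*(n:ℝ)+1) * C n p (fun _ => 1) 0
        - ((2*(n:ℝ)-1) + ∑ m ∈ Finset.Icc 1 (n-1), (2*(n:ℝ) - 2*(m:ℝ) - 1) * pp p 0 m) := by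
  have hins : Finset.Icc 0 (n-1) = insert 0 (Finset.Icc 1 (n-1)) := by
    ext x; simp; omega
  have h0 : (0:ℕ) ∉ Finset.Icc 1 (n-1) := by simp
  rw [C_one_zero, hins, Finset.sum_insert h0, Finset.sum_insert h0, pp_self]
  have hsum : ∑ m ∈ Finset.Icc 1 (n-1),
      ((2*(n:ℝ)+1) * pp p 0 m - (2*(n:ℝ) - 2*(m:ℝ) - 1) * pp p 0 m)
      = ∑ m ∈ Finset.Icc 1 (n-1), 2*(((m:ℝ)+1) * pp p 0 m) :=
    Finset.sum_congr rfl fun m _ => by ring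
  rw [Finset.sum_sub_distrib, ← Finset.mul_sum, ← Finset.mul_sum] at hsum
  push_cast
  linear_combination -hsum

lemma reindexS (n : ℕ) (hn : 0 < n) (p : ℕ → ℝ) :
    ∑ i ∈ Finset.Icc 1 (n-1), (2*(i:ℝ)-1) * ∏ j ∈ Finset.Icc 1 (n-i), p j
      = ∑ m ∈ Finset.Icc 1 (n-1), (2*(n:ℝ) - 2*(m:ℝ) - 1) * pp p 0 m := by
  refine Finset.sum_nbij' (fun i => n - i) (fun m => n - m) ?_ ?_ ?_ ?_ ?_
  · intro a ha; simp only [Finset.mem_Icc] at *; omega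
  · intro a ha; simp only [Finset.mem_Icc] at *; omega
  · intro a ha; simp only [Finset.mem_Icc] at ha; show n - (n - a) = a; omega
  · intro a ha; simp only [Finset.mem_Icc] at ha; show n - (n - a) = a; omega
  · intro a ha
    simp only [Finset.mem_Icc] at ha
    rw [icc_one p (n-a)]
    have hcast : ((n - a : ℕ) : ℝ) = (n:ℝ) - (a:ℝ) := by
      have : a ≤ n := by omega
      push_cast [this]; ring
    rw [hcast]
    ring

end MHVaux

open MHVaux in
/-- Latency variance of `n`-round multiheralded entanglement generation via the
fundamental matrix: for `p₁,…,pₙ ∈ (0,1]`, with `N = (I − Qₙ)⁻¹`, `t = N·𝟏`, and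
`v = (2N − I)·t − t ⊙ t` (Hadamard product),
`v₀ = ((1 + ∑_{i=1}^{n−1} ∏_{j=1}^{i} p_j)/(∏_{i=1}^{n} p_i))²
      − (2n−1 + ∑_{i=1}^{n−1} (2i−1)∏_{j=1}^{n−i} p_j)/(∏_{i=1}^{n} p_i)`. -/
theorem multiheralded_latency_variance (n : ℕ) (hn : 0 < n) (p : ℕ → ℝ)
    (hp : ∀ i ∈ Finset.Icc 1 n, 0 < p i ∧ p i ≤ 1) :
    let N : Matrix (Fin n) (Fin n) ℝ := (1 - multiHeraldedQ n p)⁻¹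
    let t : Fin n → ℝ := N *ᵥ (fun _ => 1)
    let v : Fin n → ℝ := (2 • N - 1) *ᵥ t - t * t
    v ⟨0, hn⟩
      = ((1 + ∑ i ∈ Finset.Icc 1 (n - 1), ∏ j ∈ Finset.Icc 1 i, p j)
            / (∏ i ∈ Finset.Icc 1 n, p i)) ^ 2
        - (2 * (n : ℝ) - 1
            + ∑ i ∈ Finset.Icc 1 (n - 1),
                (2 * (i : ℝ) - 1) * ∏ j ∈ Finset.Icc 1 (n - i), p j)
            / (∏ i ∈ Finset.Icc 1 n, p i) := by
  have hPpos : 0 < pp p 0 n := by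
    refine Finset.prod_pos fun j hj => ?_
    simp only [Finset.mem_Ioc] at hj
    exact (hp j (Finset.mem_Icc.2 ⟨hj.1, hj.2⟩)).1
  have hPn : pp p 0 n ≠ 0 := ne_of_gt hPpos
  set M : Matrix (Fin n) (Fin n) ℝ := 1 - multiHeraldedQ n p with hM
  have hT := solve n hn p hPn (fun _ => 1)
  have hU := solve n hn p hPn (fun k => W n p (fun _ => 1) k)
  have hunit : IsUnit M := by
    rw [← Matrix.mulVec_injective_iff_isUnit]
    intro x y hxy
    have h0 : M *ᵥ (x - y) = 0 := by
      rw [Matrix.mulVec_sub, hxy, sub_self]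
    have := ker_zero n hn p hPn (x - y) h0
    exact sub_eq_zero.1 this
  have hinv : M⁻¹ * M = 1 := Matrix.nonsing_inv_mul M ((Matrix.isUnit_iff_isUnit_det M).1 hunit)
  have cancel : ∀ w : Fin n → ℝ, M⁻¹ *ᵥ (M *ᵥ w) = w := by
    intro w; rw [Matrix.mulVec_mulVec, hinv, Matrix.one_mulVec]
  have ht : M⁻¹ *ᵥ (fun _ => (1:ℝ)) = fun i : Fin n => W n p (fun _ => 1) (i:ℕ) := by
    calc M⁻¹ *ᵥ (fun _ => (1:ℝ))
        = M⁻¹ *ᵥ (M *ᵥ (fun i : Fin n => W n p (fun _ => 1) (i:ℕ))) := by rw [hT]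
      _ = _ := cancel _
  have hu : M⁻¹ *ᵥ (fun i : Fin n => W n p (fun _ => 1) (i:ℕ))
      = fun i : Fin n => W n p (fun k => W n p (fun _ => 1) k) (i:ℕ) := by
    calc M⁻¹ *ᵥ (fun i : Fin n => W n p (fun _ => 1) (i:ℕ))
        = M⁻¹ *ᵥ (M *ᵥ (fun i : Fin n => W n p (fun k => W n p (fun _ => 1) k) (i:ℕ))) := by
          rw [hU]
      _ = _ := cancel _
  intro N t v
  have hv : v = (2 • M⁻¹ - 1) *ᵥ (M⁻¹ *ᵥ (fun _ => (1:ℝ)))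
      - (M⁻¹ *ᵥ (fun _ => (1:ℝ))) * (M⁻¹ *ᵥ (fun _ => (1:ℝ))) := rfl
  rw [hv, ht]
  have hexp : (2 • M⁻¹ - (1 : Matrix (Fin n) (Fin n) ℝ))
        *ᵥ (fun i : Fin n => W n p (fun _ => 1) (i:ℕ))
      = 2 • (M⁻¹ *ᵥ (fun i : Fin n => W n p (fun _ => 1) (i:ℕ)))
        - (fun i : Fin n => W n p (fun _ => 1) (i:ℕ)) := by
    rw [Matrix.sub_mulVec, Matrix.one_mulVec, two_smul, two_smul, Matrix.add_mulVec]
  rw [hexp, hu]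
  simp only [Pi.sub_apply, Pi.mul_apply, Pi.smul_apply, smul_eq_mul]
  show (2:ℕ) • W n p (fun k => W n p (fun _ => 1) k) 0 - W n p (fun _ => 1) 0
      - W n p (fun _ => 1) 0 * W n p (fun _ => 1) 0 = _
  rw [W_zero n p _ hPn, W_zero n p _ hPn, B0_eq n hn p hPn]
  have hA0 : C n p (fun _ => 1) 0
      = 1 + ∑ i ∈ Finset.Icc 1 (n-1), ∏ j ∈ Finset.Icc 1 i, p j := by
    rw [C_one_zero, show Finset.Icc 0 (n-1) = insert 0 (Finset.Icc 1 (n-1)) by ext x; simp; omega,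
      Finset.sum_insert (by simp), pp_self]
    exact congrArg (fun z => 1 + z) (Finset.sum_congr rfl fun i _ => (icc_one p i).symm)
  rw [icc_one p n, reindexS n hn p, ← hA0]
  have key := key_identity n hn p
  set S := ∑ m ∈ Finset.Icc 1 (n - 1), (2 * (n:ℝ) - 2 * (m:ℝ) - 1) * pp p 0 m with hS
  rw [nsmul_eq_mul]
  push_cast
  field_simp
  linear_combination pp p 0 n * key
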